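/- Under the assumptions of the geometric lemma (X* of full column rank k with a positive vector a satisfying a'X* = 0), and letting u₁,…,uₙ be i.i.d. with a continuous symmetric c.d.f. F₀ having finite k-th absolute moment, the integral ∫_{ℝᵏ} ∫_{ℝⁿ} 1{X*β ≤ u} dF₀ⁿ(u) dβ is finite, bounded by K·Σᵢ E|uᵢ|^k up to a constant. -/

import Mathlib

open Real Set Filter Topology MeasureTheory

/-- The marginal of a product of probability measures is the factor measure. -/
lemma pi_map_eval_aux {n : ℕ} (μ : Fin n → Measure ℝ) [∀ i, IsProbabilityMeasure (μ i)]
    (i : Fin n) : (Measure.pi μ).map (fun u => u i) = μ i := by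
  ext s hs
  rw [Measure.map_apply (measurable_pi_apply i) hs]
  have hpre : (fun u : Fin n → ℝ => u i) ⁻¹' s
      = Set.pi Set.univ (Function.update (fun _ => Set.univ) i s) := Set.eval_preimage
  rw [hpre, Measure.pi_pi]
  rw [Finset.prod_eq_single i (fun j _ hj => by
      rw [Function.update_of_ne hj]; exact measure_univ) (by simp)]
  rw [Function.update_self]

/-- Full column rank gives injectivity of `mulVec`. -/
lemma mulVecLin_injective_aux {n k : ℕ} (X : Matrix (Fin n) (Fin k) ℝ) (hrank : X.rank = k) :
    Function.Injective X.mulVecLin := by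
  rw [← LinearMap.ker_eq_bot]
  have h := X.mulVecLin.finrank_range_add_finrank_ker
  rw [show Module.finrank ℝ (Fin k → ℝ) = k from Module.finrank_fin_fun ℝ] at h
  have hr : Module.finrank ℝ (LinearMap.range X.mulVecLin) = k := hrank
  rw [hr] at h
  have : Module.finrank ℝ (LinearMap.ker X.mulVecLin) = 0 := by omega
  exact Submodule.finrank_eq_zero.mp this

/-- The geometric lemma: a positive vector in the left kernel forces some coordinate
of `X β` to be at least `c ‖β‖`. -/
lemma geom_aux {n k : ℕ} [NeZero n] [NeZero k] (X : Matrix (Fin n) (Fin k) ℝ)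
    (hrank : X.rank = k) (a : Fin n → ℝ) (ha : ∀ i, 0 < a i)
    (haX : Matrix.vecMul a X = 0) :
    ∃ c > 0, ∀ β : Fin k → ℝ, ∃ i, c * ‖β‖ ≤ X.mulVec β i := by
  have hinj := mulVecLin_injective_aux X hrank
  have hne : (Finset.univ : Finset (Fin n)).Nonempty := Finset.univ_nonempty
  set g : (Fin k → ℝ) → ℝ := fun β => Finset.univ.sup' hne (fun i => X.mulVec β i) with hg
  have hci : ∀ i : Fin n, Continuous fun β : Fin k → ℝ => X.mulVec β i := by
    intro i
    simpa [Matrix.mulVec, dotProduct] using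
      continuous_finset_sum Finset.univ
        (fun j _ => (continuous_const.mul (continuous_apply j) :
          Continuous fun β : Fin k → ℝ => X i j * β j))
  have hgc : Continuous g := by
    rw [continuous_iff_continuousAt]
    intro β
    exact Filter.Tendsto.finset_sup'_nhds_apply hne (fun i _ => (hci i).continuousAt)
  have hpos : ∀ β ∈ Metric.sphere (0 : Fin k → ℝ) 1, 0 < g β := by
    intro β hβ
    have hβ0 : β ≠ 0 := by
      intro h
      simp [h] at hβ
    have hXβ : X.mulVec β ≠ 0 := fun h => hβ0 (hinj (by simpa using h))
    by_contra hle
    push_neg at hle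
    have hall : ∀ i, X.mulVec β i ≤ 0 := fun i =>
      le_trans (Finset.le_sup' _ (Finset.mem_univ i)) hle
    have hsum : ∑ i, a i * X.mulVec β i = 0 := by
      have := Matrix.dotProduct_mulVec a X β
      rw [haX] at this
      simpa [dotProduct] using this
    have hzero : ∀ i ∈ Finset.univ, a i * X.mulVec β i = 0 := by
      have h' : ∀ i ∈ Finset.univ, 0 ≤ -(a i * X.mulVec β i) := fun i _ =>
        neg_nonneg.mpr (mul_nonpos_of_nonneg_of_nonpos (ha i).le (hall i))
      have hs' : ∑ i, -(a i * X.mulVec β i) = 0 := by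
        rw [Finset.sum_neg_distrib, hsum, neg_zero]
      intro i hi
      have := (Finset.sum_eq_zero_iff_of_nonneg h').mp hs' i hi
      linarith [this]
    apply hXβ
    funext i
    have := hzero i (Finset.mem_univ i)
    have hai := (ha i).ne'
    have : X.mulVec β i = 0 := by
      rcases mul_eq_zero.mp this with h | h
      · exact absurd h hai
      · exact h
    simpa using this
  have hsne : (Metric.sphere (0 : Fin k → ℝ) 1).Nonempty :=
    NormedSpace.sphere_nonempty.mpr zero_le_one
  obtain ⟨β₀, hβ₀, hmin⟩ := (isCompact_sphere (0 : Fin k → ℝ) 1).exists_isMinOn hsne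
    hgc.continuousOn
  refine ⟨g β₀, hpos β₀ hβ₀, fun β => ?_⟩
  rcases eq_or_ne β 0 with rfl | hβ0
  · exact ⟨Classical.arbitrary (Fin n), by simp [Matrix.mulVec_zero]⟩
  · have hnβ : 0 < ‖β‖ := norm_pos_iff.mpr hβ0
    set β' : Fin k → ℝ := ‖β‖⁻¹ • β with hβ'
    have hβ'mem : β' ∈ Metric.sphere (0 : Fin k → ℝ) 1 := by
      simp only [mem_sphere_iff_norm, sub_zero, hβ', norm_smul, norm_inv, norm_norm]
      field_simp
    have hgβ' : g β₀ ≤ g β' := hmin hβ'mem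
    obtain ⟨i, _, hi⟩ := Finset.exists_mem_eq_sup' hne (fun i => X.mulVec β' i)
    refine ⟨i, ?_⟩
    have hXsmul : X.mulVec β' i = ‖β‖⁻¹ * X.mulVec β i := by
      rw [hβ', Matrix.mulVec_smul]
      simp
    have h1 : g β₀ ≤ ‖β‖⁻¹ * X.mulVec β i := by
      rw [← hXsmul, ← hi]; exact hgβ'
    calc g β₀ * ‖β‖ ≤ (‖β‖⁻¹ * X.mulVec β i) * ‖β‖ := by
          exact mul_le_mul_of_nonneg_right h1 hnβ.le
      _ = X.mulVec β i := by field_simp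

lemma mulVec_cont_aux {n k : ℕ} (X : Matrix (Fin n) (Fin k) ℝ) (i : Fin n) :
    Continuous fun β : Fin k → ℝ => X.mulVec β i := by
  simpa [Matrix.mulVec, dotProduct] using
    continuous_finset_sum Finset.univ
      (fun j _ => (continuous_const.mul (continuous_apply j) :
        Continuous fun β : Fin k → ℝ => X i j * β j))

/-- Posterior propriety of the binary regression model under a flat prior on `β`: with
`u₁,…,uₙ` i.i.d. from a continuous symmetric c.d.f. `F₀` with finite `k`-th absolute
moment, and `X*` of full column rank admitting a positive vector `a` with `a' X* = 0`,
the integral `∫_{ℝᵏ} P(X* β ≤ u) dβ` is finite. -/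
theorem stmt_18 {n k : ℕ} [NeZero n] (f : StieltjesFunction ℝ) (hcont : Continuous f)
    (h0 : Tendsto (f : ℝ → ℝ) atBot (nhds 0)) (h1 : Tendsto (f : ℝ → ℝ) atTop (nhds 1))
    (hsym : ∀ x, f (-x) = 1 - f x)
    (hmom : ∫⁻ u, ENNReal.ofReal (|u| ^ k) ∂f.measure < ⊤)
    (X : Matrix (Fin n) (Fin k) ℝ) (hrank : X.rank = k)
    (a : Fin n → ℝ) (ha : ∀ i, 0 < a i) (haX : Matrix.vecMul a X = 0) :
    ∫⁻ β : Fin k → ℝ,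
        (Measure.pi fun _ : Fin n => f.measure) {u | ∀ i, X.mulVec β i ≤ u i} < ⊤ := by
  haveI : IsProbabilityMeasure f.measure := f.isProbabilityMeasure h0 h1
  set μ := f.measure with hμ
  set P : Measure (Fin n → ℝ) := Measure.pi fun _ : Fin n => μ with hπ
  rcases Nat.eq_zero_or_pos k with hk | hk
  · subst hk
    calc ∫⁻ β : Fin 0 → ℝ, P {u | ∀ i, X.mulVec β i ≤ u i}
        ≤ ∫⁻ _β : Fin 0 → ℝ, 1 := lintegral_mono fun β => prob_le_one
      _ = volume (univ : Set (Fin 0 → ℝ)) := by rw [lintegral_one]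
      _ < ⊤ := by
          rw [show (volume : Measure (Fin 0 → ℝ)) = Measure.pi fun _ => volume from rfl,
            Measure.pi_univ]
          simp
  haveI : NeZero k := ⟨hk.ne'⟩
  obtain ⟨c, hc, hkey⟩ := geom_aux X hrank a ha haX
  -- the product-measurable set
  set S : Set ((Fin k → ℝ) × (Fin n → ℝ)) := {p | ∀ i, X.mulVec p.1 i ≤ p.2 i} with hSdef
  have hS : MeasurableSet S := by
    have : S = ⋂ i, {p : (Fin k → ℝ) × (Fin n → ℝ) | X.mulVec p.1 i ≤ p.2 i} := by
      ext p; simp [hSdef, Set.mem_iInter]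
    rw [this]
    exact MeasurableSet.iInter fun i =>
      measurableSet_le ((mulVec_cont_aux X i).comp continuous_fst).measurable
        ((continuous_apply i).comp continuous_snd).measurable
  set F : (Fin k → ℝ) × (Fin n → ℝ) → ENNReal := S.indicator (fun _ => 1) with hFdef
  have hF : Measurable F := measurable_one.indicator hS
  have hset1 : ∀ β : Fin k → ℝ, MeasurableSet {u : Fin n → ℝ | ∀ i, X.mulVec β i ≤ u i} := by
    intro β
    have : {u : Fin n → ℝ | ∀ i, X.mulVec β i ≤ u i}
        = ⋂ i, {u : Fin n → ℝ | X.mulVec β i ≤ u i} := by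
      ext u; simp [Set.mem_iInter]
    rw [this]
    exact MeasurableSet.iInter fun i =>
      measurableSet_le measurable_const (measurable_pi_apply i)
  have hset2 : ∀ u : Fin n → ℝ, MeasurableSet {β : Fin k → ℝ | ∀ i, X.mulVec β i ≤ u i} := by
    intro u
    have : {β : Fin k → ℝ | ∀ i, X.mulVec β i ≤ u i}
        = ⋂ i, {β : Fin k → ℝ | X.mulVec β i ≤ u i} := by
      ext β; simp [Set.mem_iInter]
    rw [this]
    exact MeasurableSet.iInter fun i =>
      measurableSet_le (mulVec_cont_aux X i).measurable measurable_const
  have step1 : ∫⁻ β : Fin k → ℝ, P {u | ∀ i, X.mulVec β i ≤ u i}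
      = ∫⁻ β : Fin k → ℝ, ∫⁻ u : Fin n → ℝ, F (β, u) ∂P := by
    refine lintegral_congr fun β => Eq.symm ?_
    calc ∫⁻ u : Fin n → ℝ, F (β, u) ∂P
        = ∫⁻ u : Fin n → ℝ,
            ({u : Fin n → ℝ | ∀ i, X.mulVec β i ≤ u i}).indicator (fun _ => 1) u ∂P :=
          lintegral_congr fun u => by simp [hFdef, Set.indicator_apply, hSdef]
      _ = P {u : Fin n → ℝ | ∀ i, X.mulVec β i ≤ u i} := lintegral_indicator_one (hset1 β)
  have step2 : ∫⁻ β : Fin k → ℝ, ∫⁻ u : Fin n → ℝ, F (β, u) ∂P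
      = ∫⁻ u : Fin n → ℝ, ∫⁻ β : Fin k → ℝ, F (β, u) ∂volume ∂P := by
    exact lintegral_lintegral_swap (f := fun β u => F (β, u))
      (by exact hF.aemeasurable)
  have step3 : ∀ u : Fin n → ℝ, ∫⁻ β : Fin k → ℝ, F (β, u)
      = volume {β : Fin k → ℝ | ∀ i, X.mulVec β i ≤ u i} := by
    intro u
    calc ∫⁻ β : Fin k → ℝ, F (β, u)
        = ∫⁻ β : Fin k → ℝ,
            ({β : Fin k → ℝ | ∀ i, X.mulVec β i ≤ u i}).indicator (fun _ => 1) β :=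
          lintegral_congr fun β => by simp [hFdef, Set.indicator_apply, hSdef]
      _ = volume {β : Fin k → ℝ | ∀ i, X.mulVec β i ≤ u i} := lintegral_indicator_one (hset2 u)
  -- pointwise volume bound
  have hvol : ∀ u : Fin n → ℝ, volume {β : Fin k → ℝ | ∀ i, X.mulVec β i ≤ u i}
      ≤ ENNReal.ofReal ((2 * ↑n / c) ^ k * ∑ i, |u i| ^ k) := by
    intro u
    set M : ℝ := ∑ i, |u i| with hM
    have hM0 : 0 ≤ M := Finset.sum_nonneg fun i _ => abs_nonneg _
    have hsub : {β : Fin k → ℝ | ∀ i, X.mulVec β i ≤ u i}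
        ⊆ Metric.closedBall (0 : Fin k → ℝ) (M / c) := by
      intro β hβ
      obtain ⟨i, hi⟩ := hkey β
      have h2 : X.mulVec β i ≤ u i := hβ i
      have h3 : u i ≤ M :=
        le_trans (le_abs_self _)
          (Finset.single_le_sum (fun j _ => abs_nonneg (u j)) (Finset.mem_univ i))
      have h4 : c * ‖β‖ ≤ M := le_trans hi (le_trans h2 h3)
      rw [Metric.mem_closedBall, dist_zero_right]
      rw [le_div_iff₀ hc]
      linarith [h4]
    calc volume {β : Fin k → ℝ | ∀ i, X.mulVec β i ≤ u i}
        ≤ volume (Metric.closedBall (0 : Fin k → ℝ) (M / c)) := measure_mono hsub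
      _ = ENNReal.ofReal ((2 * (M / c)) ^ Fintype.card (Fin k)) :=
          Real.volume_pi_closedBall 0 (div_nonneg hM0 hc.le)
      _ ≤ ENNReal.ofReal ((2 * ↑n / c) ^ k * ∑ i, |u i| ^ k) := by
          rw [Fintype.card_fin]
          apply ENNReal.ofReal_le_ofReal
          obtain ⟨i₀, _, hi₀⟩ := Finset.exists_max_image Finset.univ (fun i => |u i|)
            Finset.univ_nonempty
          have hMn : M ≤ (n : ℝ) * |u i₀| := by
            calc M ≤ ∑ _i : Fin n, |u i₀| :=
                  Finset.sum_le_sum fun i _ => hi₀ i (Finset.mem_univ i)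
              _ = (n : ℝ) * |u i₀| := by
                  rw [Finset.sum_const, Finset.card_univ, Fintype.card_fin, nsmul_eq_mul]
          have h1 : 2 * (M / c) ≤ (2 * ↑n / c) * |u i₀| := by
            have h2M : 2 * M ≤ 2 * ((n : ℝ) * |u i₀|) := by linarith
            calc 2 * (M / c) = (2 * M) / c := by ring
              _ ≤ (2 * ((n : ℝ) * |u i₀|)) / c := by gcongr
              _ = (2 * ↑n / c) * |u i₀| := by ring
          have h0' : 0 ≤ 2 * (M / c) := by positivity
          calc (2 * (M / c)) ^ k ≤ ((2 * ↑n / c) * |u i₀|) ^ k :=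
                pow_le_pow_left₀ h0' h1 k
            _ = (2 * ↑n / c) ^ k * |u i₀| ^ k := mul_pow _ _ _
            _ ≤ (2 * ↑n / c) ^ k * ∑ i, |u i| ^ k := by
                apply mul_le_mul_of_nonneg_left _ (by positivity)
                exact Finset.single_le_sum (f := fun j => |u j| ^ k)
                  (fun j _ => by positivity) (Finset.mem_univ i₀)
  -- finiteness of the bounding integral
  have hmeas_i : ∀ i : Fin n, Measurable fun u : Fin n → ℝ => ENNReal.ofReal (|u i| ^ k) :=
    fun i => ((measurable_pi_apply i).abs.pow_const k).ennreal_ofReal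
  have hmarg : ∀ i : Fin n, ∫⁻ u : Fin n → ℝ, ENNReal.ofReal (|u i| ^ k) ∂P
      = ∫⁻ t : ℝ, ENNReal.ofReal (|t| ^ k) ∂μ := by
    intro i
    have hg : Measurable fun t : ℝ => ENNReal.ofReal (|t| ^ k) :=
      (measurable_abs.pow_const k).ennreal_ofReal
    have h := lintegral_map (μ := (Measure.pi fun _ : Fin n => μ)) hg (measurable_pi_apply i)
    rw [pi_map_eval_aux (fun _ : Fin n => μ) i] at h
    exact h.symm
  have hbound : ∫⁻ u : Fin n → ℝ, ENNReal.ofReal ((2 * ↑n / c) ^ k * ∑ i, |u i| ^ k) ∂P < ⊤ := by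
    have heq : ∀ u : Fin n → ℝ, ENNReal.ofReal ((2 * ↑n / c) ^ k * ∑ i, |u i| ^ k)
        = ENNReal.ofReal ((2 * ↑n / c) ^ k) * ∑ i, ENNReal.ofReal (|u i| ^ k) := by
      intro u
      rw [ENNReal.ofReal_mul (by positivity), ENNReal.ofReal_sum_of_nonneg
        (fun i _ => by positivity)]
    simp_rw [heq]
    rw [lintegral_const_mul' _ _ ENNReal.ofReal_ne_top,
      lintegral_finset_sum _ (fun i _ => hmeas_i i)]
    simp_rw [hmarg]
    rw [Finset.sum_const, Finset.card_univ, Fintype.card_fin]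
    rw [nsmul_eq_mul]
    exact ENNReal.mul_lt_top ENNReal.ofReal_lt_top
      (ENNReal.mul_lt_top (by simp [lt_top_iff_ne_top]) hmom)
  calc ∫⁻ β : Fin k → ℝ, P {u | ∀ i, X.mulVec β i ≤ u i}
      = ∫⁻ u : Fin n → ℝ, ∫⁻ β : Fin k → ℝ, F (β, u) ∂volume ∂P := by rw [step1, step2]
    _ = ∫⁻ u : Fin n → ℝ, volume {β : Fin k → ℝ | ∀ i, X.mulVec β i ≤ u i} ∂P := by
        exact lintegral_congr fun u => step3 u
    _ ≤ ∫⁻ u : Fin n → ℝ, ENNReal.ofReal ((2 * ↑n / c) ^ k * ∑ i, |u i| ^ k) ∂P :=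
        lintegral_mono fun u => hvol u
    _ < ⊤ := hbound
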